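/- Let G be a k-connected graph, S a minimum vertex-cut of G, and F a fragment of G to S (i.e., the union of at least one but not all components of G - S). Then the graph G⟨S⟩[S ∪ F], obtained from the induced subgraph on S ∪ V(F) by adding all edges making S a clique, is k-connected. -/
import Mathlib


open SimpleGraph Set

/-- `KConn G k` means the vertex connectivity of `G` is at least `k`:
removing any set of fewer than `k` vertices leaves at least two vertices
and a connected graph. -/
def KConn {V : Type*} (G : SimpleGraph V) (k : ℕ) : Prop :=
  ∀ S : Set V, S.ncard < k → 2 ≤ Sᶜ.ncard ∧ (G.induce Sᶜ).Connected

/-- `addClique G S` is `G⟨S⟩`: the graph `G` with all edges among `S` added. -/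
def addClique {V : Type*} (G : SimpleGraph V) (S : Set V) : SimpleGraph V :=
  G ⊔ SimpleGraph.fromRel (fun u v => u ∈ S ∧ v ∈ S)

/-- `IsSemifragment G S F`: `F` is a union of at least one but not all
connected components of `G - S`, i.e. `F` is a nonempty subset of `Sᶜ`,
its complement in `Sᶜ` is nonempty, and there are no edges from `F` to
the rest of `G - S`. -/
def IsSemifragment {V : Type*} (G : SimpleGraph V) (S F : Set V) : Prop :=
  F.Nonempty ∧ (Sᶜ \ F).Nonempty ∧ F ⊆ Sᶜ ∧
    ∀ u ∈ F, ∀ w ∈ Sᶜ \ F, ¬ G.Adj u w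

/-- `(G, C) ∈ 𝒦ᵇ_k(t)`: `G` is `k`-connected, `C` is a clique of order `k`,
`G - V(C)` is bipartite with every one of its vertices having degree (in `G`)
at least `k + t`, and adjacent vertices outside `C` have no common neighbor. -/
def KClassB {V : Type*} (G : SimpleGraph V) (C : Set V) (k t : ℕ) : Prop :=
  KConn G k ∧ C.ncard = k ∧ (∀ u ∈ C, ∀ v ∈ C, u ≠ v → G.Adj u v) ∧
    (G.induce Cᶜ).Colorable 2 ∧ (∀ v ∈ Cᶜ, k + t ≤ (G.neighborSet v).ncard) ∧
    ∀ u ∈ Cᶜ, ∀ v ∈ Cᶜ, G.Adj u v → ∀ w, ¬(G.Adj u w ∧ G.Adj v w)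

/-- Mader: if S is a minimum vertex-cut of the k-connected graph G and F is a
fragment of G to S, then G⟨S⟩[S ∪ F] is k-connected. -/
theorem stmt6 {V : Type*} [Fintype V] (G : SimpleGraph V) (k : ℕ)
    (hconn : KConn G k) (S F : Set V) (hScard : S.ncard = k)
    (hScut : ¬ (G.induce Sᶜ).Connected) (hF : IsSemifragment G S F) :
    KConn ((addClique G S).induce (S ∪ F)) k := by
  classical
  intro T hT
  have hk : 0 < k := lt_of_le_of_lt (Nat.zero_le _) hT
  set T' : Set V := Subtype.val '' T with hT'def
  have hT'card : T'.ncard = T.ncard :=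
    Set.ncard_image_of_injective _ Subtype.val_injective
  have hT'k : T'.ncard < k := by rwa [hT'card]
  obtain ⟨hc2, hcConn⟩ := hconn T' hT'k
  obtain ⟨hFne, ⟨w, hw⟩, hFS, hfrag⟩ := hF
  have hdisj : Disjoint S F := by
    rw [Set.disjoint_right]
    intro x hxF hxS
    exact hFS hxF hxS
  have hUcard : (S ∪ F).ncard = k + F.ncard := by
    rw [Set.ncard_union_eq hdisj (Set.toFinite _) (Set.toFinite _), hScard]
  have hF1 : 1 ≤ F.ncard := (Set.ncard_pos (Set.toFinite _)).mpr hFne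
  have hccard := Set.ncard_add_ncard_compl T (Set.toFinite _) (Set.toFinite _)
  rw [Nat.card_coe_set_eq, hUcard] at hccard
  have hTc2 : 2 ≤ (Tᶜ : Set ↥(S ∪ F)).ncard := by omega
  refine ⟨hTc2, ?_⟩
  have key : ∀ a : ↥(Tᶜ : Set ↥(S ∪ F)), ∃ b : ↥(Tᶜ : Set ↥(S ∪ F)),
      ((b : ↥(S ∪ F)) : V) ∈ S ∧
      ((((addClique G S).induce (S ∪ F)).induce Tᶜ)).Reachable a b := by
    intro a
    by_cases haS : ((a : ↥(S ∪ F)) : V) ∈ S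
    · exact ⟨a, haS, Reachable.refl a⟩
    by_contra hcon
    push_neg at hcon
    set A : Set V := {x | ∃ (hx : x ∈ S ∪ F) (hx2 : (⟨x, hx⟩ : ↥(S ∪ F)) ∈ Tᶜ),
      ((((addClique G S).induce (S ∪ F)).induce Tᶜ)).Reachable a ⟨⟨x, hx⟩, hx2⟩}
      with hAdef
    have hAF : A ⊆ F := by
      rintro x ⟨hx, hx2, hr⟩
      rcases hx with hxS | hxF
      · exact absurd hr (hcon ⟨⟨x, Or.inl hxS⟩, hx2⟩ hxS)
      · exact hxF
    have hclosed : ∀ x ∈ A, ∀ y, G.Adj x y → y ∉ T' → y ∈ A := by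
      intro x hxA y hxy hyT'
      have hxF : x ∈ F := hAF hxA
      have hyU : y ∈ S ∪ F := by
        by_contra hyU
        exact hfrag x hxF y ⟨fun h => hyU (Or.inl h), fun h => hyU (Or.inr h)⟩ hxy
      have hyT : (⟨y, hyU⟩ : ↥(S ∪ F)) ∈ Tᶜ := by
        intro hmem
        exact hyT' ⟨_, hmem, rfl⟩
      obtain ⟨hx, hx2, hr⟩ := hxA
      refine ⟨hyU, hyT, hr.trans (Adj.reachable ?_)⟩
      show (addClique G S).Adj x y
      exact Or.inl hxy
    have haA : ((a : ↥(S ∪ F)) : V) ∈ A := ⟨(a : ↥(S ∪ F)).2, a.2, Reachable.refl _⟩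
    have haT'c : ((a : ↥(S ∪ F)) : V) ∈ T'ᶜ := by
      rintro ⟨t, htT, hteq⟩
      exact a.2 (by rwa [Subtype.ext hteq] at htT)
    have hwT'c : w ∈ T'ᶜ := by
      rintro ⟨t, htT, hteq⟩
      have ht2 := t.2
      rw [hteq] at ht2
      rcases ht2 with h | h
      · exact hw.1 h
      · exact hw.2 h
    obtain ⟨p⟩ := hcConn.preconnected ⟨_, haT'c⟩ ⟨w, hwT'c⟩
    have hwalk : ∀ (u v : ↥(T'ᶜ)) (q : (G.induce T'ᶜ).Walk u v),
        (u : V) ∈ A → (v : V) ∈ A := by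
      intro u v q
      induction q with
      | nil => exact id
      | @cons u u' v h q ih =>
        intro hu
        exact ih (hclosed _ hu _ h u'.2)
    exact hw.2 (hAF (hwalk _ _ p haA))
  rw [connected_iff]
  refine ⟨?_, ?_⟩
  · intro a b
    obtain ⟨sa, hsa, hra⟩ := key a
    obtain ⟨sb, hsb, hrb⟩ := key b
    refine hra.trans (Reachable.trans ?_ hrb.symm)
    by_cases hss : sa = sb
    · rw [hss]
    · refine Adj.reachable ?_
      show (addClique G S).Adj _ _
      refine Or.inr ?_
      rw [SimpleGraph.fromRel_adj]
      exact ⟨fun h => hss (Subtype.ext (Subtype.ext h)), Or.inl ⟨hsa, hsb⟩⟩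
  · have : (Tᶜ : Set ↥(S ∪ F)).Nonempty := by
      apply Set.nonempty_of_ncard_ne_zero
      omega
    exact Set.nonempty_coe_sort.mpr this
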